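/- Let S be a real m×m matrix that is NOT symmetric. Then there exist a₁, a₂ ∈ ℝᵐ with |a₁| = |a₂| = 1 such that K(a₁,a₂)·(a₁,a₂) < 0, where K = [[S*, Sᵀ],[S, S*]]. In particular K has a negative eigenvalue. -/

import Mathlib

open Matrix

/-- The block matrix K = [[S*, Sᵀ],[S, S*]] built from a square matrix S,
where S* = (S + Sᵀ)/2 is the symmetric part. -/
noncomputable def Kmat {m : ℕ} (S : Matrix (Fin m) (Fin m) ℝ) :
    Matrix (Fin m ⊕ Fin m) (Fin m ⊕ Fin m) ℝ :=
  Matrix.fromBlocks ((1 / 2 : ℝ) • (S + Sᵀ)) Sᵀ S ((1 / 2 : ℝ) • (S + Sᵀ))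

/-- Quadratic form of K evaluated on the concatenated vector (a₁, a₂). -/
noncomputable def quadK {m : ℕ} (S : Matrix (Fin m) (Fin m) ℝ)
    (a₁ a₂ : Fin m → ℝ) : ℝ :=
  Kmat S *ᵥ Sum.elim a₁ a₂ ⬝ᵥ Sum.elim a₁ a₂

/-- Euclidean norm of a vector in ℝᵐ. -/
noncomputable def enorm₂ {m : ℕ} (a : Fin m → ℝ) : ℝ :=
  Real.sqrt (a ⬝ᵥ a)

lemma transp_dot {m : ℕ} (S : Matrix (Fin m) (Fin m) ℝ) (x y : Fin m → ℝ) :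
    (Sᵀ *ᵥ x) ⬝ᵥ y = (S *ᵥ y) ⬝ᵥ x := by
  rw [mulVec_transpose, ← dotProduct_mulVec, dotProduct_comm]

lemma quadK_eq {m : ℕ} (S : Matrix (Fin m) (Fin m) ℝ) (a₁ a₂ : Fin m → ℝ) :
    quadK S a₁ a₂ = (S *ᵥ a₁) ⬝ᵥ a₁ + 2 * ((S *ᵥ a₁) ⬝ᵥ a₂) + (S *ᵥ a₂) ⬝ᵥ a₂ := by
  simp only [quadK, Kmat, fromBlocks_mulVec, sumElim_dotProduct_sumElim,
    Matrix.add_mulVec, Matrix.smul_mulVec, add_dotProduct, smul_dotProduct,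
    transp_dot, smul_eq_mul, Sum.elim_comp_inl, Sum.elim_comp_inr]
  ring

lemma Kmat_herm {m : ℕ} (S : Matrix (Fin m) (Fin m) ℝ) : (Kmat S).IsHermitian := by
  unfold Matrix.IsHermitian
  rw [show (Kmat S)ᴴ = (Kmat S)ᵀ from rfl]
  simp only [Kmat, Matrix.fromBlocks_transpose, transpose_add, transpose_smul,
    transpose_transpose]
  rw [add_comm S Sᵀ]

theorem stmt8 {m : ℕ} (S : Matrix (Fin m) (Fin m) ℝ) (hns : Sᵀ ≠ S) :
    (∃ a₁ a₂ : Fin m → ℝ, enorm₂ a₁ = 1 ∧ enorm₂ a₂ = 1 ∧ quadK S a₁ a₂ < 0) ∧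
    (∃ (lam : ℝ) (v : Fin m ⊕ Fin m → ℝ), lam < 0 ∧ v ≠ 0 ∧
      Kmat S *ᵥ v = lam • v) := by
  classical
  have hM : S - Sᵀ ≠ 0 := sub_ne_zero.mpr (fun h => hns h.symm)
  obtain ⟨v, hv⟩ : ∃ v : Fin m → ℝ, (S - Sᵀ) *ᵥ v ≠ 0 := by
    by_contra h
    push_neg at h
    apply hM
    ext i j
    have := congrFun (h (Pi.single j 1)) i
    simpa [Matrix.mulVec_single] using this
  set w : Fin m → ℝ := (S - Sᵀ) *ᵥ v with hw
  -- orthogonality of v and w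
  have hvw : v ⬝ᵥ w = 0 := by
    have h1 : w ⬝ᵥ v = ((S - Sᵀ)ᵀ *ᵥ v) ⬝ᵥ v := by rw [transp_dot]
    have h2 : (S - Sᵀ)ᵀ = -(S - Sᵀ) := by
      rw [transpose_sub, transpose_transpose, neg_sub]
    rw [h2, Matrix.neg_mulVec, neg_dotProduct, hw] at h1
    rw [dotProduct_comm]
    linarith
  have hkey : (S *ᵥ v) ⬝ᵥ w - (S *ᵥ w) ⬝ᵥ v = w ⬝ᵥ w := by
    have h3 : (S *ᵥ w) ⬝ᵥ v = (Sᵀ *ᵥ v) ⬝ᵥ w := (transp_dot S v w).symm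
    rw [h3, ← sub_dotProduct, ← Matrix.sub_mulVec, ← hw]
  set c : ℝ := w ⬝ᵥ w with hc
  have hcnn : 0 ≤ c := Finset.sum_nonneg fun i _ => mul_self_nonneg _
  have hcpos : 0 < c :=
    lt_of_le_of_ne hcnn (Ne.symm (dotProduct_self_eq_zero.not.mpr hv))
  set d : ℝ := (S *ᵥ w) ⬝ᵥ w with hd
  set ε : ℝ := c / (2 * (1 + |d|)) with hε
  have hdnn : (0:ℝ) ≤ |d| := abs_nonneg d
  have hεpos : 0 < ε := by positivity
  set t : ℝ := -ε with ht
  set a₁ : Fin m → ℝ := v + t • w with ha₁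
  set a₂ : Fin m → ℝ := t • w - v with ha₂
  have hquad : quadK S a₁ a₂ = 4 * t ^ 2 * d + 2 * t * c := by
    rw [quadK_eq, ha₁, ha₂]
    simp only [Matrix.mulVec_add, Matrix.mulVec_sub, Matrix.mulVec_smul,
      dotProduct_add, dotProduct_sub, add_dotProduct, sub_dotProduct,
      dotProduct_smul, smul_dotProduct, smul_eq_mul]
    linear_combination (2 * t) * hkey
  have hquadneg : quadK S a₁ a₂ < 0 := by
    rw [hquad, ht, hε]
    have hda : d ≤ |d| := le_abs_self d
    have h1d : (0:ℝ) < 1 + |d| := by linarith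
    rw [div_eq_mul_inv]
    set i : ℝ := (2 * (1 + |d|))⁻¹ with hi
    have hinv : (0:ℝ) < i := by rw [hi]; positivity
    have hmul : i * (2 * (1 + |d|)) = 1 := inv_mul_cancel₀ (by positivity)
    have h2id : 2 * i * d < 1 := by nlinarith
    have hfin : 0 < 2 * (c * c) * i * (1 - 2 * i * d) := by
      have := mul_pos (mul_pos (mul_pos (by linarith : (0:ℝ) < 2)
        (mul_pos hcpos hcpos)) hinv) (by linarith : (0:ℝ) < 1 - 2 * i * d)
      linarith
    nlinarith [hfin]
  -- norms of a₁ and a₂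
  have hvpos : 0 < v ⬝ᵥ v := by
    have hv0 : v ≠ 0 := by
      intro h; apply hv; simp [hw, h]
    exact lt_of_le_of_ne (Finset.sum_nonneg fun i _ => mul_self_nonneg _)
      (Ne.symm (dotProduct_self_eq_zero.not.mpr hv0))
  set n : ℝ := v ⬝ᵥ v + t ^ 2 * c with hn
  have hnpos : 0 < n := by nlinarith [sq_nonneg t]
  have hwv : w ⬝ᵥ v = 0 := by rw [dotProduct_comm]; exact hvw
  have hn1 : a₁ ⬝ᵥ a₁ = n := by
    rw [ha₁, hn]
    simp only [dotProduct_add, add_dotProduct, dotProduct_smul, smul_dotProduct,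
      smul_eq_mul]
    rw [hvw, hwv]; ring
  have hn2 : a₂ ⬝ᵥ a₂ = n := by
    rw [ha₂, hn]
    simp only [dotProduct_sub, sub_dotProduct, dotProduct_smul, smul_dotProduct,
      smul_eq_mul]
    rw [hvw, hwv]; ring
  set s : ℝ := (Real.sqrt n)⁻¹ with hs
  have hsqpos : 0 < Real.sqrt n := Real.sqrt_pos.mpr hnpos
  have hspos : 0 < s := by positivity
  have hnorm : ∀ x : Fin m → ℝ, x ⬝ᵥ x = n → enorm₂ (s • x) = 1 := by
    intro x hx
    rw [enorm₂]
    simp only [dotProduct_smul, smul_dotProduct, smul_eq_mul]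
    have hss : Real.sqrt n * Real.sqrt n = n := Real.mul_self_sqrt hnpos.le
    have h1 : s * Real.sqrt n = 1 := inv_mul_cancel₀ hsqpos.ne'
    have h2 : s * (s * n) = 1 := by
      linear_combination (-(s * s)) * hss + (s * Real.sqrt n + 1) * h1
    rw [hx, h2, Real.sqrt_one]
  have hqsmul : quadK S (s • a₁) (s • a₂) = s ^ 2 * quadK S a₁ a₂ := by
    simp only [quadK_eq, Matrix.mulVec_smul, dotProduct_smul, smul_dotProduct,
      smul_eq_mul]
    ring
  have hqneg' : quadK S (s • a₁) (s • a₂) < 0 := by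
    rw [hqsmul]
    exact mul_neg_of_pos_of_neg (by positivity) hquadneg
  refine ⟨⟨s • a₁, s • a₂, hnorm a₁ hn1, hnorm a₂ hn2, hqneg'⟩, ?_⟩
  -- negative eigenvalue
  have hK := Kmat_herm S
  set u : Fin m ⊕ Fin m → ℝ := Sum.elim (s • a₁) (s • a₂) with hu
  have hqu : (Kmat S *ᵥ u) ⬝ᵥ u < 0 := hqneg'
  have hex : ∃ i, hK.eigenvalues i < 0 := by
    by_contra h
    push_neg at h
    have hps := (Matrix.IsHermitian.posSemidef_iff_eigenvalues_nonneg hK).mpr h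
    have h0 := hps.dotProduct_mulVec_nonneg u
    rw [show star u = u from rfl, dotProduct_comm] at h0
    exact absurd hqu (not_lt.mpr h0)
  obtain ⟨i, hi⟩ := hex
  exact ⟨hK.eigenvalues i, hK.eigenvectorBasis i, hi,
    (WithLp.ofLp_eq_zero 2).ne.2 <| hK.eigenvectorBasis.orthonormal.ne_zero i, hK.mulVec_eigenvectorBasis i⟩
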